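/- arXiv:2101.07885 — 4 statements merged into one kernel-verified Lean document; each statement's English description precedes it below -/
import Mathlib

section
/- A free group is residually nilpotent: the intersection of all terms of its lower central series is trivial. -/
open Finsupp Polynomial Finset

open scoped Classical

namespace Magnus

variable {α : Type*}

/-- basis vector of the Magnus module -/
noncomputable def δ (l : List α) : List α →₀ ℤ := Finsupp.single l 1

variable (n : ℕ)

/-- truncation at length `n` -/
noncomputable def trunc : (List α →₀ ℤ) →ₗ[ℤ] (List α →₀ ℤ) where
  toFun v := v.filter (fun l => l.length ≤ n)
  map_add' _ _ := Finsupp.filter_add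
  map_smul' _ _ := Finsupp.filter_smul

/-- truncated left multiplication by the variable `i` -/
noncomputable def L (i : α) : Module.End ℤ (List α →₀ ℤ) :=
  (trunc n) ∘ₗ (Finsupp.lmapDomain ℤ ℤ (fun l => i :: l))

lemma L_apply (i : α) (v : List α →₀ ℤ) (a : α) (u : List α) :
    L n i v (a :: u) = if a = i ∧ u.length + 1 ≤ n then v u else 0 := by
  show (Finsupp.filter _ (Finsupp.mapDomain _ v)) (a :: u) = _
  by_cases hl : (a :: u).length ≤ n
  · rw [Finsupp.filter_apply, if_pos hl]
    by_cases ha : a = i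
    · subst ha
      rw [show (a :: u) = (fun l => a :: l) u from rfl,
        Finsupp.mapDomain_apply (fun x y h => by simpa using h)]
      simp only [List.length_cons] at hl
      simp [hl]
    · rw [Finsupp.mapDomain_notin_range]
      · simp [ha]
      · rintro ⟨l, hl'⟩
        exact ha (by simpa using congrArg List.head? hl'.symm) |>.elim
  · rw [Finsupp.filter_apply, if_neg hl]
    simp only [List.length_cons] at hl
    rw [if_neg (by tauto)]

lemma L_apply_nil (i : α) (v : List α →₀ ℤ) : L n i v [] = 0 := by
  show (Finsupp.filter _ (Finsupp.mapDomain _ v)) [] = 0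
  rw [Finsupp.filter_apply, if_pos (by simp)]
  rw [Finsupp.mapDomain_notin_range]
  rintro ⟨l, hl⟩
  simp at hl

lemma L_apply_long (i : α) (v : List α →₀ ℤ) (w : List α) (h : n < w.length) :
    L n i v w = 0 := by
  show (Finsupp.filter _ (Finsupp.mapDomain _ v)) w = 0
  rw [Finsupp.filter_apply, if_neg (by omega)]

lemma Lpow_strip (i : α) (j : ℕ) (v : List α →₀ ℤ) (y : List α)
    (h : (List.replicate j i ++ y).length ≤ n ∨ j = 0) :
    ((L n i ^ j) v) (List.replicate j i ++ y) = v y := by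
  induction j with
  | zero => simp
  | succ j ih =>
    have hlen : (List.replicate (j+1) i ++ y).length ≤ n := by
      rcases h with h | h
      · exact h
      · omega
    simp only [List.length_append, List.length_replicate] at hlen
    rw [pow_succ', Module.End.mul_apply, List.replicate_succ, List.cons_append, L_apply]
    rw [if_pos (by refine ⟨rfl, ?_⟩; simp; omega)]
    exact ih (Or.inl (by simp; omega))

lemma Lpow_notpre (i : α) (j : ℕ) (v : List α →₀ ℤ) (w : List α)
    (h : ¬ (List.replicate j i <+: w)) : ((L n i ^ j) v) w = 0 := by
  induction j generalizing w with
  | zero => exact absurd (by simpa using List.nil_prefix w) h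
  | succ j ih =>
    rw [pow_succ', Module.End.mul_apply]
    cases w with
    | nil => exact L_apply_nil n i _
    | cons a u =>
      rw [L_apply]
      split_ifs with hc
      · refine ih u fun hpre => h ?_
        rw [List.replicate_succ, hc.1]
        exact List.cons_prefix_cons.mpr ⟨rfl, hpre⟩
      · rfl

lemma Lpow_long (i : α) (j : ℕ) (hj : j ≠ 0) (v : List α →₀ ℤ) (w : List α)
    (h : n < w.length) : ((L n i ^ j) v) w = 0 := by
  obtain ⟨j, rfl⟩ := Nat.exists_eq_succ_of_ne_zero hj
  rw [pow_succ', Module.End.mul_apply]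
  exact L_apply_long n i _ w h

lemma Lpow_top (i : α) : (L n i) ^ (n + 1) = 0 := by
  refine LinearMap.ext fun v => Finsupp.ext fun w => ?_
  rw [LinearMap.zero_apply, Finsupp.zero_apply]
  by_cases hp : List.replicate (n+1) i <+: w
  · exact Lpow_long n i (n+1) (by omega) v w (by have := hp.length_le; simpa using this)
  · exact Lpow_notpre n i (n+1) v w hp

/-- the unit `1 + Xᵢ` of the truncated Magnus algebra -/
noncomputable def uU (i : α) : (Module.End ℤ (List α →₀ ℤ))ˣ where
  val := 1 + L n i
  inv := ∑ k ∈ range (n+1), (-(L n i))^k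
  val_inv := by
    have h0 : (-(L n i))^(n+1) = 0 := by
      rw [neg_pow, Lpow_top]; simp
    have hg := mul_geom_sum (-(L n i)) (n+1)
    rw [h0] at hg
    have h1 : (1 + L n i) = -(-(L n i) - 1) := by rw [neg_sub, sub_neg_eq_add]
    rw [h1, neg_mul, hg]
    simp
  inv_val := by
    have h0 : (-(L n i))^(n+1) = 0 := by
      rw [neg_pow, Lpow_top]; simp
    have hg := geom_sum_mul (-(L n i)) (n+1)
    rw [h0] at hg
    have h1 : (1 + L n i) = -(-(L n i) - 1) := by rw [neg_sub, sub_neg_eq_add]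
    rw [h1, mul_neg, hg]
    simp

lemma coeff_one_mul' (p q : ℤ[X]) :
    (p * q).coeff 1 = p.coeff 0 * q.coeff 1 + p.coeff 1 * q.coeff 0 := by
  rw [coeff_mul, Finset.Nat.sum_antidiagonal_eq_sum_range_succ_mk]
  simp [Finset.sum_range_succ]

lemma geomq_coeff (m : ℕ) (hm : m ≤ n) :
    (∑ k ∈ range (n+1), (-X : ℤ[X])^k).coeff m = (-1)^m := by
  rw [Polynomial.finset_sum_coeff]
  have h : ∀ k, ((-X : ℤ[X])^k).coeff m = if m = k then (-1)^m else 0 := by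
    intro k
    rw [show (-X : ℤ[X]) = C (-1) * X by simp, mul_pow, ← map_pow, coeff_C_mul, coeff_X_pow]
    split_ifs with h
    · subst h; simp
    · simp
  simp only [h]
  rw [Finset.sum_ite_eq (range (n+1)) m]
  rw [if_pos (by simp; omega)]

lemma zpow_poly (hn : 1 ≤ n) (i : α) (e : ℤ) :
    ∃ p : ℤ[X], p.coeff 0 = 1 ∧ p.coeff 1 = e ∧
      ((uU n i ^ e : (Module.End ℤ (List α →₀ ℤ))ˣ) : Module.End ℤ (List α →₀ ℤ))
        = aeval (L n i) p := by
  induction e using Int.induction_on with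
  | zero => exact ⟨1, by simp, by simp [Polynomial.coeff_one], by rw [zpow_zero, Units.val_one, map_one]⟩
  | succ e ih =>
    obtain ⟨p, h0, h1, hv⟩ := ih
    refine ⟨p * (1 + X), ?_, ?_, ?_⟩
    · rw [mul_coeff_zero, h0]; simp
    · rw [coeff_one_mul', h0, h1]; simp [Polynomial.coeff_one]; ring
    · rw [zpow_add_one, Units.val_mul, hv, map_mul]
      congr 1
      rw [map_add, map_one, aeval_X]
      rfl
  | pred e ih =>
    obtain ⟨p, h0, h1, hv⟩ := ih
    have hq0 : (∑ k ∈ range (n+1), (-X : ℤ[X])^k).coeff 0 = 1 := by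
      rw [geomq_coeff n 0 (by omega)]; simp
    have hq1 : (∑ k ∈ range (n+1), (-X : ℤ[X])^k).coeff 1 = -1 := by
      rw [geomq_coeff n 1 hn]; simp
    refine ⟨p * (∑ k ∈ range (n+1), (-X : ℤ[X])^k), ?_, ?_, ?_⟩
    · rw [mul_coeff_zero, h0, hq0]; simp
    · rw [coeff_one_mul', h0, h1, hq0, hq1]; ring
    · rw [zpow_sub_one, Units.val_mul, hv, map_mul]
      congr 1
      rw [map_sum]
      show (∑ k ∈ range (n+1), (-(L n i))^k) = _
      exact Finset.sum_congr rfl fun k _ => by rw [map_pow, map_neg, aeval_X]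

end Magnus
namespace Magnus

variable {α : Type*} (n : ℕ)

open Finsupp Polynomial Finset

lemma detect (hn : 1 ≤ n) (bs : List (α × ℤ))
    (hchain : bs.Chain' (fun p q => p.1 ≠ q.1)) (hlen : bs.length ≤ n) :
    ((((bs.map fun p : α × ℤ => uU n p.1 ^ p.2).prod :
        (Module.End ℤ (List α →₀ ℤ))ˣ) : Module.End ℤ (List α →₀ ℤ)) (δ []))
        (bs.map Prod.fst) = (bs.map Prod.snd).prod
    ∧ ∀ (u : List α) (c : α), (∀ p ∈ bs.head?, c ≠ p.1) →
      ((((bs.map fun p : α × ℤ => uU n p.1 ^ p.2).prod :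
        (Module.End ℤ (List α →₀ ℤ))ˣ) : Module.End ℤ (List α →₀ ℤ)) (δ []))
        (u ++ c :: bs.map Prod.fst) = 0 := by
  induction bs with
  | nil =>
    constructor
    · simp [δ]
    · intro u c _
      simp only [List.map_nil, List.prod_nil, Units.val_one, Module.End.one_apply]
      exact Finsupp.single_eq_of_ne' (by simp)
  | cons hd bs ih =>
    obtain ⟨i, e⟩ := hd
    have hchain' := List.isChain_cons.mp hchain
    obtain ⟨p, hp0, hp1, hval⟩ := zpow_poly n hn i e
    obtain ⟨IH1, IH2⟩ := ih hchain'.2 (le_trans (by simp) hlen)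
    set V : List α →₀ ℤ :=
      (((bs.map fun p : α × ℤ => uU n p.1 ^ p.2).prod :
        (Module.End ℤ (List α →₀ ℤ))ˣ) : Module.End ℤ (List α →₀ ℤ)) (δ []) with hV
    have hsplit : ∀ w : List α,
        ((((((i,e) :: bs).map fun p : α × ℤ => uU n p.1 ^ p.2).prod :
          (Module.End ℤ (List α →₀ ℤ))ˣ) : Module.End ℤ (List α →₀ ℤ)) (δ ([] : List α))) w
        = ∑ j ∈ range (p.natDegree + 1), p.coeff j * (((L n i ^ j) V) w) := by
      intro w
      rw [List.map_cons, List.prod_cons, Units.val_mul, Module.End.mul_apply, ← hV,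
        hval, aeval_eq_sum_range, LinearMap.sum_apply, Finsupp.finset_sum_apply]
      refine Finset.sum_congr rfl fun j _ => ?_
      rw [LinearMap.smul_apply, Finsupp.smul_apply, smul_eq_mul]
    have hhd : ∀ q ∈ bs.head?, i ≠ q.1 := hchain'.1
    constructor
    · -- the main coefficient
      rw [show (((i,e) :: bs).map Prod.fst) = i :: bs.map Prod.fst from rfl, hsplit]
      rw [Finset.sum_eq_single 1]
      · rw [show (i :: bs.map Prod.fst) = List.replicate 1 i ++ bs.map Prod.fst by simp,
          Lpow_strip n i 1 V (bs.map Prod.fst) (Or.inl (by simp at hlen ⊢; omega)), IH1, hp1]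
        simp
      · intro j _ hj1
        match j, hj1 with
        | 0, _ =>
          rw [pow_zero, Module.End.one_apply,
            show (i :: bs.map Prod.fst) = [] ++ i :: bs.map Prod.fst from rfl,
            IH2 [] i hhd, mul_zero]
        | (j+2), _ =>
          rw [Lpow_notpre, mul_zero]
          intro hpre
          rw [List.replicate_succ] at hpre
          have hpre' := (List.cons_prefix_cons.mp hpre).2
          cases bs with
          | nil =>
            have := hpre'.length_le
            simp at this
          | cons q bs' =>
            have : i ≠ q.1 := hhd q rfl
            rw [List.replicate_succ, List.map_cons] at hpre'
            exact this (List.cons_prefix_cons.mp hpre').1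
      · intro h1
        have : p.natDegree < 1 := by
          simp only [Finset.mem_range] at h1; omega
        rw [Polynomial.coeff_eq_zero_of_natDegree_lt this, zero_mul]
    · -- the vanishing invariant
      intro u c hc
      have hci : c ≠ i := hc (i, e) rfl
      rw [show (((i,e) :: bs).map Prod.fst) = i :: bs.map Prod.fst from rfl, hsplit]
      refine Finset.sum_eq_zero fun j _ => ?_
      have key : ∀ t : List α, V (t ++ c :: i :: bs.map Prod.fst) = 0 := by
        intro t
        rw [show t ++ c :: i :: bs.map Prod.fst = (t ++ [c]) ++ i :: bs.map Prod.fst by simp]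
        exact IH2 (t ++ [c]) i hhd
      match j with
      | 0 =>
        rw [pow_zero, Module.End.one_apply, show u ++ c :: i :: bs.map Prod.fst
            = (u ++ [c]) ++ i :: bs.map Prod.fst by simp, IH2 (u ++ [c]) i hhd, mul_zero]
      | (j+1) =>
        by_cases hpre : List.replicate (j+1) i <+: u ++ c :: i :: bs.map Prod.fst
        · by_cases hlong : n < (u ++ c :: i :: bs.map Prod.fst).length
          · rw [Lpow_long n i (j+1) (by omega) V _ hlong, mul_zero]
          · obtain ⟨y, hy⟩ := hpre
            rw [show u ++ c :: i :: bs.map Prod.fst = List.replicate (j+1) i ++ y from hy.symm,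
              Lpow_strip n i (j+1) V y (Or.inl (by rw [hy]; omega))]
            rcases List.append_eq_append_iff.mp hy with ⟨t, ht1, ht2⟩ | ⟨t, ht1, ht2⟩
            · -- u = replicate ++ t, y = t ++ c :: ...
              rw [ht2, key t, mul_zero]
            · -- replicate = u ++ t, c :: ... = t ++ y
              cases t with
              | nil =>
                simp only [List.nil_append] at ht2
                rw [← ht2, show c :: i :: bs.map Prod.fst
                  = [] ++ c :: i :: bs.map Prod.fst from rfl, key [], mul_zero]
              | cons x t' =>
                exfalso
                have hx : x ∈ List.replicate (j+1) i := by
                  rw [ht1]; exact List.mem_append_right _ (List.mem_cons_self)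
                have : c = x := by
                  have := congrArg List.head? ht2
                  simpa using this
                exact hci (this.trans (List.eq_of_mem_replicate hx))
        · rw [Lpow_notpre n i (j+1) V _ hpre, mul_zero]

end Magnus
namespace Magnus

variable {α : Type*} (n : ℕ)

open Finsupp Finset

/-- span of basis words of length between `m` and `n` -/
noncomputable def W (m : ℕ) : Submodule ℤ (List α →₀ ℤ) :=
  Submodule.span ℤ {v | ∃ l : List α, m ≤ l.length ∧ l.length ≤ n ∧ v = δ l}

/-- the filtration predicate on endomorphisms -/
def Jf (k : ℕ) (f : Module.End ℤ (List α →₀ ℤ)) : Prop :=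
  ∀ l : List α, f (δ l) ∈ W n (l.length + k)

lemma Wmono {m m' : ℕ} (h : m ≤ m') : W (α := α) n m' ≤ W n m :=
  Submodule.span_mono (by rintro v ⟨l, h1, h2, rfl⟩; exact ⟨l, le_trans h h1, h2, rfl⟩)

lemma Wbot {m : ℕ} (h : n < m) : W (α := α) n m = ⊥ := by
  rw [W, Submodule.span_eq_bot]
  rintro v ⟨l, h1, h2, rfl⟩
  omega

lemma Jzero (k : ℕ) : Jf (α := α) n k 0 := fun l => by
  simp only [LinearMap.zero_apply]; exact Submodule.zero_mem _

lemma Jadd {k : ℕ} {f g} (hf : Jf (α := α) n k f) (hg : Jf n k g) : Jf n k (f + g) :=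
  fun l => by rw [LinearMap.add_apply]; exact Submodule.add_mem _ (hf l) (hg l)

lemma Jneg {k : ℕ} {f} (hf : Jf (α := α) n k f) : Jf n k (-f) :=
  fun l => by rw [LinearMap.neg_apply]; exact Submodule.neg_mem _ (hf l)

lemma Jsub {k : ℕ} {f g} (hf : Jf (α := α) n k f) (hg : Jf n k g) : Jf n k (f - g) :=
  fun l => by rw [LinearMap.sub_apply]; exact Submodule.sub_mem _ (hf l) (hg l)

lemma Jsum {k : ℕ} {ι : Type*} (s : Finset ι) (f : ι → Module.End ℤ (List α →₀ ℤ))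
    (h : ∀ x ∈ s, Jf n k (f x)) : Jf n k (∑ x ∈ s, f x) := fun l => by
  rw [LinearMap.sum_apply]
  exact Submodule.sum_mem _ fun x hx => h x hx l

lemma Jmono {i j : ℕ} (h : i ≤ j) {f} (hf : Jf (α := α) n j f) : Jf n i f :=
  fun l => Wmono n (by omega) (hf l)

lemma Japply {k m : ℕ} {f} (hf : Jf (α := α) n k f) {x} (hx : x ∈ W (α := α) n m) :
    f x ∈ W (α := α) n (m + k) := by
  refine Submodule.span_induction ?_ ?_ ?_ ?_ hx
  · rintro v ⟨l, h1, h2, rfl⟩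
    exact Wmono n (by omega) (hf l)
  · rw [map_zero]; exact Submodule.zero_mem _
  · intro u v _ _ hu hv
    rw [map_add]; exact Submodule.add_mem _ hu hv
  · intro c u _ hu
    rw [map_smul]; exact Submodule.smul_mem _ _ hu

lemma Jmul {i j : ℕ} {f g} (hf : Jf (α := α) n i f) (hg : Jf n j g) :
    Jf n (i + j) (f * g) := fun l => by
  rw [show l.length + (i + j) = l.length + j + i by omega]
  exact Japply n hf (hg l)

lemma L_mem (i : α) : Jf n 1 (L n i) := by
  intro l
  show (Finsupp.filter _ (Finsupp.mapDomain _ (Finsupp.single l 1))) ∈ _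
  rw [Finsupp.mapDomain_single]
  by_cases hl : (i :: l).length ≤ n
  · rw [Finsupp.filter_single_of_pos (p := fun l : List α => l.length ≤ n) hl]
    exact Submodule.subset_span ⟨i :: l, by simp, by simpa using hl, rfl⟩
  · rw [Finsupp.filter_single_of_neg (p := fun l : List α => l.length ≤ n) hl]
    exact Submodule.zero_mem _

lemma Jpow {k : ℕ} (hk : 1 ≤ k) {f} (hf : Jf (α := α) n 1 f) : Jf n k (f ^ k) := by
  induction k with
  | zero => omega
  | succ k ih =>
    rcases Nat.eq_or_lt_of_le hk with h | h
    · rw [← h, pow_one]; exact hf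
    · rw [pow_succ]
      exact Jmul n (ih (by omega)) hf

lemma uU_val_mem (i : α) : Jf n 1 ((uU n i : Module.End ℤ (List α →₀ ℤ)) - 1) := by
  have : (uU n i : Module.End ℤ (List α →₀ ℤ)) - 1 = L n i := by
    show (1 + L n i) - 1 = L n i
    abel
  rw [this]; exact L_mem n i

lemma uU_inv_mem (i : α) :
    Jf n 1 (((uU n i)⁻¹ : (Module.End ℤ (List α →₀ ℤ))ˣ).val - 1) := by
  have hval : ((uU n i)⁻¹ : (Module.End ℤ (List α →₀ ℤ))ˣ).val
      = ∑ k ∈ range (n+1), (-(L n i))^k := rfl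
  have : ((uU n i)⁻¹ : (Module.End ℤ (List α →₀ ℤ))ˣ).val - 1
      = ∑ k ∈ range n, (-(L n i))^(k+1) := by
    rw [hval, Finset.sum_range_succ']
    simp
  rw [this]
  refine Jsum n _ _ fun k _ => ?_
  exact Jmono n (by omega) (Jpow n (by omega) (Jneg n (L_mem n i)))

/-- the congruence subgroups of the unit group -/
noncomputable def NN (k : ℕ) : Subgroup (Module.End ℤ (List α →₀ ℤ))ˣ where
  carrier := {u | Jf n k ((u : Module.End ℤ (List α →₀ ℤ)) - 1)
    ∧ Jf n k (((u⁻¹ : _ˣ) : Module.End ℤ (List α →₀ ℤ)) - 1)}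
  one_mem' := by
    constructor <;> · rw [show ((_ : (Module.End ℤ (List α →₀ ℤ))ˣ) : _) = (1 : Module.End ℤ (List α →₀ ℤ)) by simp, sub_self]; exact Jzero n k
  mul_mem' := by
    rintro u v ⟨hu, hu'⟩ ⟨hv, hv'⟩
    have key : ∀ x y : Module.End ℤ (List α →₀ ℤ), Jf n k (x - 1) → Jf n k (y - 1) →
        Jf n k (x * y - 1) := by
      intro x y hx hy
      have : x * y - 1 = (x - 1) * (y - 1) + ((x - 1) + (y - 1)) := by noncomm_ring
      rw [this]
      exact Jadd n (Jmono n (by omega) (Jmul n hx hy)) (Jadd n hx hy)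
    constructor
    · rw [Units.val_mul]; exact key _ _ hu hv
    · rw [mul_inv_rev, Units.val_mul]; exact key _ _ hv' hu'
  inv_mem' := by
    rintro u ⟨hu, hu'⟩
    exact ⟨hu', by rw [inv_inv]; exact hu⟩

lemma comm_key {i j : ℕ} (hi : 1 ≤ i) (hj : 1 ≤ j) (x y : (Module.End ℤ (List α →₀ ℤ))ˣ)
    (hx : x ∈ NN (α := α) n i) (hy : y ∈ NN n j) :
    Jf n (i + j) ((↑(x * y * x⁻¹ * y⁻¹) : Module.End ℤ (List α →₀ ℤ)) - 1) := by
  obtain ⟨hx1, hx2⟩ := hx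
  obtain ⟨hy1, hy2⟩ := hy
  set a : Module.End ℤ (List α →₀ ℤ) := ↑x - 1 with ha
  set b : Module.End ℤ (List α →₀ ℤ) := ↑y - 1 with hb
  have hxx : (↑x : Module.End ℤ (List α →₀ ℤ)) * ↑x⁻¹ = 1 := x.mul_inv
  have hyy : (↑y : Module.End ℤ (List α →₀ ℤ)) * ↑y⁻¹ = 1 := y.mul_inv
  have hid : (↑(x * y * x⁻¹ * y⁻¹) : Module.End ℤ (List α →₀ ℤ)) - 1
      = (a * b - b * a) * (↑x⁻¹ * ↑y⁻¹) := by
    have e1 : a * b - b * a = (↑x * ↑y - ↑y * ↑x : Module.End ℤ (List α →₀ ℤ)) := by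
      rw [ha, hb]; noncomm_ring
    have e2 : ((↑y * ↑x) : Module.End ℤ (List α →₀ ℤ)) * (↑x⁻¹ * ↑y⁻¹) = 1 := by
      rw [mul_assoc, ← mul_assoc (↑x : Module.End ℤ (List α →₀ ℤ)), hxx, one_mul, hyy]
    rw [e1, sub_mul, e2]
    simp only [Units.val_mul]
    rw [mul_assoc (↑x * ↑y : Module.End ℤ (List α →₀ ℤ))]
  rw [hid]
  have hd : Jf n (i + j) (a * b - b * a) :=
    Jsub n (Jmul n hx1 hy1) (by rw [show i + j = j + i by omega]; exact Jmul n hy1 hx1)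
  set g : Module.End ℤ (List α →₀ ℤ) := ↑x⁻¹ * ↑y⁻¹ - 1 with hg
  have hgmem : Jf n 1 g := by
    have : g = (↑x⁻¹ - 1) * (↑y⁻¹ - 1) + ((↑x⁻¹ - 1) + (↑y⁻¹ - 1)) := by
      rw [hg]; noncomm_ring
    rw [this]
    have h1 : Jf n 1 ((↑x⁻¹ : Module.End ℤ (List α →₀ ℤ)) - 1) := Jmono n hi hx2
    have h2 : Jf n 1 ((↑y⁻¹ : Module.End ℤ (List α →₀ ℤ)) - 1) := Jmono n hj hy2
    exact Jadd n (Jmono n (by omega) (Jmul n h1 h2)) (Jadd n h1 h2)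
  have : ((↑x⁻¹ * ↑y⁻¹) : Module.End ℤ (List α →₀ ℤ)) = 1 + g := by rw [hg]; abel
  rw [this, mul_add, mul_one]
  exact Jadd n hd (Jmono n (by omega) (Jmul n hd hgmem))

open scoped commutatorElement in
lemma comm_mem {i : ℕ} (hi : 1 ≤ i) (x y : (Module.End ℤ (List α →₀ ℤ))ˣ)
    (hx : x ∈ NN (α := α) n i) (hy : y ∈ NN n 1) : ⁅x, y⁆ ∈ NN n (i + 1) := by
  constructor
  · rw [commutatorElement_def]
    exact comm_key n hi le_rfl x y hx hy
  · rw [commutatorElement_inv, commutatorElement_def]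
    rw [show i + 1 = 1 + i by omega]
    exact comm_key n le_rfl hi y x hy hx

lemma gamma_le (φ : FreeGroup α →* (Module.End ℤ (List α →₀ ℤ))ˣ)
    (hφ : ∀ g, φ g ∈ NN (α := α) n 1) (k : ℕ) :
    ∀ w ∈ (⊤ : Subgroup (FreeGroup α)).lowerCentralSeries k, φ w ∈ NN n (k + 1) := by
  induction k with
  | zero => exact fun w _ => hφ w
  | succ k ih =>
    intro w hw
    rw [Subgroup.mem_lowerCentralSeries_succ_iff] at hw
    have hmem : φ w ∈ Subgroup.map φ (Subgroup.closure
        {x | ∃ p ∈ (⊤ : Subgroup (FreeGroup α)).lowerCentralSeries k, ∃ q ∈ (⊤ : Subgroup (FreeGroup α)),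
          p * q * p⁻¹ * q⁻¹ = x}) := ⟨w, hw, rfl⟩
    rw [MonoidHom.map_closure] at hmem
    refine (Subgroup.closure_le _).mpr ?_ hmem
    rintro _ ⟨z, ⟨pp, hp, q, -, rfl⟩, rfl⟩
    have := comm_mem n (by omega) (φ pp) (φ q) (ih pp hp) (hφ q)
    rw [commutatorElement_def] at this
    simpa [map_mul, map_inv] using this

end Magnus
namespace Magnus

variable {α : Type*}

open Finsupp Finset

lemma mk_cons (a : α) (b : Bool) (t : List (α × Bool)) :
    FreeGroup.mk ((a, b) :: t) = FreeGroup.of a ^ (if b then (1 : ℤ) else -1) * FreeGroup.mk t := by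
  have h : FreeGroup.mk ((a, b) :: t) = FreeGroup.mk [(a, b)] * FreeGroup.mk t := by
    rw [FreeGroup.mul_mk]; rfl
  rw [h]
  congr 1
  cases b
  · rw [if_neg (by simp), zpow_neg, zpow_one]
    rw [show (FreeGroup.of a : FreeGroup α) = FreeGroup.mk [(a, true)] from rfl,
      FreeGroup.inv_mk]
    rfl
  · rw [if_pos rfl, zpow_one]
    rfl

/-- group the letters of a word into maximal blocks -/
noncomputable def blk : List (α × Bool) → List (α × ℤ)
  | [] => []
  | (a, b) :: t =>
    match blk t with
    | [] => [(a, if b then 1 else -1)]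
    | (c, e) :: r =>
      if a = c then (a, e + if b then 1 else -1) :: r
      else (a, if b then 1 else -1) :: (c, e) :: r

lemma blk_spec : ∀ (ws : List (α × Bool)),
    ws.Chain' (fun p q => p.1 = q.1 → p.2 = q.2) →
    ((blk ws).Chain' (fun p q => p.1 ≠ q.1)
    ∧ (∀ p ∈ blk ws, p.2 ≠ 0)
    ∧ FreeGroup.mk ws = ((blk ws).map (fun p => FreeGroup.of p.1 ^ p.2)).prod
    ∧ (blk ws = [] ↔ ws = [])
    ∧ (∀ p ∈ (blk ws).head?, ∀ q ∈ ws.head?, p.1 = q.1 ∧ (0 < p.2 ↔ q.2 = true))) := by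
  intro ws
  induction ws with
  | nil =>
    intro _
    refine ⟨by simp [blk]; exact List.isChain_nil, by simp [blk], by simp [blk]; rfl, by simp [blk], by simp [blk]⟩
  | cons hd t ih =>
    obtain ⟨a, b⟩ := hd
    intro hch
    have hch' := List.isChain_cons.mp hch
    obtain ⟨ihc, ihe, ihp, ihn, ihh⟩ := ih hch'.2
    have hsver : (if b then (1:ℤ) else -1) ≠ 0 ∧ ((0:ℤ) < (if b then (1:ℤ) else -1) ↔ b = true) := by
      cases b <;> simp [← FreeGroup.one_eq_mk]
    cases hbt : blk t with
    | nil =>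
      have ht : t = [] := ihn.mp hbt
      subst ht
      have hb : blk [(a, b)] = [(a, if b then 1 else -1)] := rfl
      refine ⟨by rw [hb]; exact List.isChain_singleton _, ?_, ?_, by rw [hb]; simp, ?_⟩
      · rw [hb]; rintro p hp
        simp only [List.mem_singleton] at hp
        subst hp
        exact hsver.1
      · rw [hb, mk_cons]
        cases b <;> simp [← FreeGroup.one_eq_mk]
      · rw [hb]
        rintro p hp q hq
        simp only [List.head?_cons, Option.mem_some_iff] at hp hq
        subst hp; subst hq
        exact ⟨rfl, hsver.2⟩
    | cons ce r =>
      obtain ⟨c, e⟩ := ce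
      rw [hbt] at ihc ihp
      have ht : t ≠ [] := fun h => by rw [h] at hbt; simp [blk] at hbt
      obtain ⟨⟨a', b'⟩, t', rfl⟩ := List.exists_cons_of_ne_nil ht
      have hhead := ihh (c, e) (by rw [hbt]; rfl) (a', b') rfl
      have hca : c = a' := hhead.1
      have hsign : 0 < e ↔ b' = true := hhead.2
      have he : e ≠ 0 := ihe (c, e) (by rw [hbt]; exact List.mem_cons_self)
      have hblk : blk ((a, b) :: (a', b') :: t')
          = if a = c then (a, e + if b then 1 else -1) :: r
            else (a, if b then 1 else -1) :: (c, e) :: r := by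
        show (match blk ((a', b') :: t') with
          | [] => [(a, if b then 1 else -1)]
          | (c, e) :: r =>
            if a = c then (a, e + if b then 1 else -1) :: r
            else (a, if b then 1 else -1) :: (c, e) :: r) = _
        rw [hbt]
      have ihc' := List.isChain_cons.mp ihc
      by_cases hac : a = c
      · -- merge into the head block
        rw [if_pos hac] at hblk
        have hb' : b' = b := (hch'.1 (a', b') rfl (by rw [← hca, ← hac])).symm
        rw [hb'] at hsign
        have hfacts : (e + if b then (1:ℤ) else -1) ≠ 0
            ∧ ((0:ℤ) < (e + if b then (1:ℤ) else -1) ↔ b = true) := by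
          cases b
          · have hs : (if (false:Bool) = true then (1:ℤ) else -1) = -1 := rfl
            rw [hs]
            simp only [Bool.false_eq_true, iff_false, not_lt] at hsign ⊢
            exact ⟨by omega, by omega⟩
          · have hs : (if (true:Bool) = true then (1:ℤ) else -1) = 1 := rfl
            rw [hs]
            simp only [iff_true] at hsign
            have h1 : 0 < e := hsign
            exact ⟨by omega, by simp; omega⟩
        refine ⟨?_, ?_, ?_, by rw [hblk]; simp, ?_⟩
        · rw [hblk]
          exact List.isChain_cons.mpr ⟨fun y hy => hac ▸ ihc'.1 y hy, ihc'.2⟩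
        · rw [hblk]
          rintro p hp
          rcases List.mem_cons.mp hp with rfl | hp
          · exact hfacts.1
          · exact ihe p (by rw [hbt]; exact List.mem_cons_of_mem _ hp)
        · rw [hblk, mk_cons, ihp]
          simp only [List.map_cons, List.prod_cons, ← mul_assoc]
          congr 1
          rw [hac, ← zpow_add, add_comm]
        · rw [hblk]
          rintro p hp q hq
          simp only [List.head?_cons, Option.mem_some_iff] at hp hq
          subst hp; subst hq
          exact ⟨rfl, hfacts.2⟩
      · -- start a new block
        rw [if_neg hac] at hblk
        refine ⟨?_, ?_, ?_, by rw [hblk]; simp, ?_⟩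
        · rw [hblk]
          refine List.isChain_cons.mpr ⟨?_, ihc⟩
          rintro y hy
          simp only [List.head?_cons, Option.mem_some_iff] at hy
          subst hy
          exact hac
        · rw [hblk]
          rintro p hp
          rcases List.mem_cons.mp hp with rfl | hp
          · exact hsver.1
          · exact ihe p (by rw [hbt]; exact hp)
        · rw [hblk, mk_cons, ihp]
          simp [List.map_cons, List.prod_cons]
        · rw [hblk]
          rintro p hp q hq
          simp only [List.head?_cons, Option.mem_some_iff] at hp hq
          subst hp; subst hq
          exact ⟨rfl, hsver.2⟩

/-- a reduced word has no adjacent cancelling pair, hence satisfies the chain condition -/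
lemma chain'_of_nocancel : ∀ (ws : List (α × Bool)),
    (∀ (l₁ : List (α × Bool)) (x : α) (b : Bool) (l₂ : List (α × Bool)),
      ws ≠ l₁ ++ (x, b) :: (x, !b) :: l₂) →
    ws.Chain' (fun p q => p.1 = q.1 → p.2 = q.2) := by
  intro ws
  induction ws with
  | nil => intro _; exact List.isChain_nil
  | cons hd t ih =>
    intro h
    cases t with
    | nil => exact List.isChain_singleton _
    | cons q t' =>
      refine List.isChain_cons_cons.mpr ⟨?_, ?_⟩
      · intro heq
        by_contra hne
        have : q.2 = !hd.2 := by
          cases hq2 : q.2 <;> cases hh2 : hd.2 <;> simp_all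
        have hq : q = (hd.1, !hd.2) := by rw [heq, ← this]
        exact h [] hd.1 hd.2 t' (by simp [← hq])
      · refine ih fun l₁ x b l₂ hq => ?_
        exact h (hd :: l₁) x b l₂ (by simp [hq])

end Magnus
/-- A free group is residually nilpotent: the intersection of all terms of its lower
central series is trivial. -/
theorem freeGroup_iInf_lowerCentralSeries_eq_bot (α : Type*) :
    (⨅ k : ℕ, (⊤ : Subgroup (FreeGroup α)).lowerCentralSeries k) = ⊥ := by
  rw [eq_bot_iff]
  intro w hw
  rw [Subgroup.mem_iInf] at hw
  rw [Subgroup.mem_bot]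
  by_contra hne
  haveI := Classical.decEq α
  have hred : ∀ (l₁ : List (α × Bool)) (x : α) (b : Bool) (l₂ : List (α × Bool)),
      w.toWord ≠ l₁ ++ (x, b) :: (x, !b) :: l₂ := by
    intro l₁ x b l₂ h
    exact FreeGroup.reduce.not (L₁ := w.toWord) (by rw [FreeGroup.reduce_toWord]; exact h)
  obtain ⟨hchain, hexp, hprod, hnil, -⟩ :=
    Magnus.blk_spec w.toWord (Magnus.chain'_of_nocancel _ hred)
  rw [FreeGroup.mk_toWord] at hprod
  set bs := Magnus.blk w.toWord with hbs
  have hbs_ne : bs ≠ [] := fun h => hne (FreeGroup.toWord_eq_nil_iff.mp (hnil.mp h))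
  set n := bs.length with hn'
  have hn : 1 ≤ n := by
    rw [hn']
    exact List.length_pos_iff.mpr hbs_ne
  set φ : FreeGroup α →* (Module.End ℤ (List α →₀ ℤ))ˣ :=
    FreeGroup.lift (fun a => Magnus.uU n a) with hφ
  have hofmem : ∀ x : α, φ (FreeGroup.of x) ∈ Magnus.NN (α := α) n 1 := by
    intro x
    rw [hφ, FreeGroup.lift_apply_of]
    exact ⟨Magnus.uU_val_mem n x, Magnus.uU_inv_mem n x⟩
  have hφmem : ∀ g, φ g ∈ Magnus.NN (α := α) n 1 := by
    intro g
    induction g using FreeGroup.induction_on with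
    | C1 => rw [map_one]; exact Subgroup.one_mem _
    | of x => exact hofmem x
    | inv_of x ih => rw [map_inv]; exact Subgroup.inv_mem _ ih
    | mul x y ihx ihy => rw [map_mul]; exact Subgroup.mul_mem _ ihx ihy
  have hγ := Magnus.gamma_le n φ hφmem n w (hw n)
  have hJ : Magnus.Jf n (n+1) ((↑(φ w) : Module.End ℤ (List α →₀ ℤ)) - 1) := hγ.1
  have hone : (↑(φ w) : Module.End ℤ (List α →₀ ℤ)) = 1 := by
    have hz : (↑(φ w) : Module.End ℤ (List α →₀ ℤ)) - 1 = 0 := by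
      refine Finsupp.lhom_ext fun l z => ?_
      have hmem := hJ l
      rw [Magnus.Wbot n (by omega)] at hmem
      have h0 : ((↑(φ w) : Module.End ℤ (List α →₀ ℤ)) - 1) (Magnus.δ l) = 0 :=
        (Submodule.mem_bot _).mp hmem
      have hsm : Finsupp.single l z = z • Magnus.δ l := by
        rw [Magnus.δ, Finsupp.smul_single]; simp
      rw [hsm, map_smul, h0, LinearMap.zero_apply]
      simp
    exact sub_eq_zero.mp hz
  have hφw : φ w = 1 := Units.ext (by rw [hone, Units.val_one])
  have hφprod : φ w = (bs.map fun p : α × ℤ => Magnus.uU n p.1 ^ p.2).prod := by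
    conv_lhs => rw [hprod]
    rw [map_list_prod, List.map_map]
    congr 1
    have hfun : (φ ∘ fun p : α × ℤ => FreeGroup.of p.1 ^ p.2)
        = fun p : α × ℤ => Magnus.uU n p.1 ^ p.2 := by
      funext p
      show φ (FreeGroup.of p.1 ^ p.2) = _
      rw [map_zpow, hφ, FreeGroup.lift_apply_of]
    rw [hfun]
  obtain ⟨hcoef, -⟩ := Magnus.detect n hn bs hchain (by rw [hn'])
  rw [← hφprod, hφw] at hcoef
  have hL : ((((1 : (Module.End ℤ (List α →₀ ℤ))ˣ)) :
      Module.End ℤ (List α →₀ ℤ)) (Magnus.δ ([] : List α))) (bs.map Prod.fst) = 0 := by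
    rw [Units.val_one, Module.End.one_apply]
    refine Finsupp.single_eq_of_ne' fun h => ?_
    exact hbs_ne (by simpa using h.symm)
  rw [hL] at hcoef
  obtain ⟨p, hp, hp2⟩ := List.mem_map.mp (List.prod_eq_zero_iff.mp hcoef.symm)
  exact hexp p hp hp2
end

section
/- If π is a finitely generated free group, then ⋂_k J(k) = {1}, where J(k) is the kernel of Aut(π) → Aut(π/Γ_k(π)) and Γ_k is the lower central series. In other words, the Johnson filtration of Aut(π) is exhaustive. -/
open MonoidAlgebra FreeMonoid
open scoped commutatorElement

namespace JM

variable {γ : Type*} [DecidableEq γ]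

instance : DecidableEq (FreeMonoid γ) := inferInstanceAs (DecidableEq (List γ))

set_option linter.unusedSectionVars false

/-- Noncommutative polynomial ring on alphabet `γ` over `ℤ`. -/
abbrev M (γ : Type*) := MonoidAlgebra ℤ (FreeMonoid γ)

/-- `Slow j x` : all coefficients of `x` on words of length `< j` vanish. -/
def Slow (j : ℕ) (x : M γ) : Prop := ∀ w : FreeMonoid γ, w.length < j → x.coeff w = 0

lemma Slow.zero (j : ℕ) : Slow j (0 : M γ) := fun _ _ => rfl

lemma Slow.add {j} {x y : M γ} (hx : Slow j x) (hy : Slow j y) : Slow j (x + y) :=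
  fun w hw => by rw [MonoidAlgebra.coeff_add, Finsupp.add_apply, hx w hw, hy w hw, add_zero]

lemma Slow.neg {j} {x : M γ} (hx : Slow j x) : Slow j (-x) :=
  fun w hw => by rw [MonoidAlgebra.coeff_neg, Finsupp.neg_apply, hx w hw, neg_zero]

lemma Slow.sub {j} {x y : M γ} (hx : Slow j x) (hy : Slow j y) : Slow j (x - y) := by
  rw [sub_eq_add_neg]; exact hx.add hy.neg

lemma Slow.anti {j j'} (h : j ≤ j') {x : M γ} (hx : Slow j' x) : Slow j x :=
  fun w hw => hx w (lt_of_lt_of_le hw h)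

lemma Slow.top (x : M γ) : Slow 0 x := fun _ hw => absurd hw (Nat.not_lt_zero _)

lemma Slow.mul {p q} {x y : M γ} (hx : Slow p x) (hy : Slow q y) : Slow (p + q) (x * y) := by
  intro w hw
  rw [MonoidAlgebra.mul_apply]
  rw [Finsupp.sum]
  apply Finset.sum_eq_zero
  intro a _
  rw [Finsupp.sum]
  apply Finset.sum_eq_zero
  intro b _
  split_ifs with h
  · have hlen : a.length + b.length = w.length := by rw [← FreeMonoid.length_mul, h]
    rcases Nat.lt_or_ge a.length p with ha | ha
    · rw [hx a ha, zero_mul]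
    · have : b.length < q := by omega
      rw [hy b this, mul_zero]
  · rfl

lemma Slow.mul_left {j} (r : M γ) {x : M γ} (hx : Slow j x) : Slow j (r * x) := by
  have := (Slow.top r).mul hx; rwa [zero_add] at this

lemma Slow.mul_right {j} {x : M γ} (hx : Slow j x) (r : M γ) : Slow j (x * r) := by
  have := hx.mul (Slow.top r); rwa [add_zero] at this

/-- Congruence modulo words of length `≥ k`. -/
def mc (γ : Type*) [DecidableEq γ] (k : ℕ) : RingCon (M γ) where
  r x y := Slow k (x - y)
  iseqv := ⟨fun x => by simpa using Slow.zero k,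
    fun {x y} h => by have := h.neg; rwa [neg_sub] at this,
    fun {x y z} h1 h2 => by have := h1.add h2; rwa [sub_add_sub_cancel] at this⟩
  mul' := by
    intro a b c d h1 h2
    show Slow k (a * c - b * d)
    have h1' : Slow k (a - b) := h1
    have h2' : Slow k (c - d) := h2
    have : a * c - b * d = a * (c - d) + (a - b) * d := by noncomm_ring
    rw [this]
    exact (Slow.mul_left a h2').add (h1'.mul_right d)
  add' := by
    intro a b c d h1 h2
    show Slow k (a + c - (b + d))
    have h1' : Slow k (a - b) := h1
    have h2' : Slow k (c - d) := h2
    have : a + c - (b + d) = (a - b) + (c - d) := by abel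
    rw [this]; exact h1'.add h2'

/-- Truncated polynomial ring: kill all words of length `≥ k`. -/
abbrev A (γ : Type*) [DecidableEq γ] (k : ℕ) := (mc γ k).Quotient

/-- Quotient map. -/
noncomputable def mkA (k : ℕ) : M γ →+* A γ k := RingCon.mk' (mc γ k)

lemma mkA_surjective (k : ℕ) : Function.Surjective (mkA (γ := γ) k) := by
  intro a
  induction a using Quotient.inductionOn' with
  | h x => exact ⟨x, rfl⟩

lemma mkA_eq_iff (k : ℕ) {x y : M γ} : mkA k x = mkA k y ↔ Slow k (x - y) :=
  RingCon.eq _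

/-- Coefficients: sign `true` ↦ `1 + X`, sign `false` ↦ truncated geometric series. -/
noncomputable def cf (s : Bool) (a : ℕ) : ℤ := if s then (if a ≤ 1 then 1 else 0) else (-1) ^ a

/-- The monomial `X!_j^a`. -/
noncomputable def Xp (j : γ) (a : ℕ) : M γ := MonoidAlgebra.single (ofList (List.replicate a j)) 1

/-- Truncated Magnus series for a signed generator. -/
noncomputable def rep (k : ℕ) (p : γ × Bool) : M γ :=
  ∑ a ∈ Finset.range k, MonoidAlgebra.single (ofList (List.replicate a p.1)) (cf p.2 a)

lemma sign_sum (k : ℕ) : ((-1:ℤ)^(k+1)) + ((-1:ℤ)^k) = 0 := by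
  rw [pow_succ]; ring

lemma geom_mul (j : γ) (k : ℕ) : (1 + Xp j 1) * rep k (j, false)
    = 1 + MonoidAlgebra.single (ofList (List.replicate k j)) ((-1) ^ (k+1)) := by
  induction k with
  | zero =>
      rw [rep, Finset.range_zero, Finset.sum_empty, mul_zero, List.replicate_zero, ofList_nil,
        MonoidAlgebra.one_def, ← MonoidAlgebra.single_add]
      norm_num
  | succ k ih =>
      rw [rep, Finset.sum_range_succ, ← rep, mul_add, ih]
      have hc : cf false k = (-1)^k := by simp [cf]
      rw [hc, add_mul, one_mul]
      have hx : Xp j 1 * MonoidAlgebra.single (ofList (List.replicate k j)) ((-1)^k : ℤ)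
          = MonoidAlgebra.single (ofList (List.replicate (k+1) j)) ((-1)^k : ℤ) := by
        rw [Xp, MonoidAlgebra.single_mul_single, one_mul, ← ofList_append, ← List.replicate_add,
          Nat.add_comm]
      rw [hx]
      have hz : MonoidAlgebra.single (ofList (List.replicate k j)) ((-1:ℤ)^(k+1))
          + MonoidAlgebra.single (ofList (List.replicate k j)) ((-1:ℤ)^k) = 0 := by
        rw [← MonoidAlgebra.single_add, sign_sum, MonoidAlgebra.single_zero]
      have hp : ((-1:ℤ)^(k+1+1)) = (-1:ℤ)^k := by rw [pow_succ, pow_succ]; ring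
      rw [hp]
      calc 1 + MonoidAlgebra.single (ofList (List.replicate k j)) ((-1:ℤ)^(k+1))
            + (MonoidAlgebra.single (ofList (List.replicate k j)) ((-1:ℤ)^k)
              + MonoidAlgebra.single (ofList (List.replicate (k+1) j)) ((-1:ℤ)^k))
          = 1 + (MonoidAlgebra.single (ofList (List.replicate k j)) ((-1:ℤ)^(k+1))
              + MonoidAlgebra.single (ofList (List.replicate k j)) ((-1:ℤ)^k))
              + MonoidAlgebra.single (ofList (List.replicate (k+1) j)) ((-1:ℤ)^k) := by abel
        _ = 1 + MonoidAlgebra.single (ofList (List.replicate (k+1) j)) ((-1:ℤ)^k) := by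
              rw [hz, add_zero]

lemma geom_mul' (j : γ) (k : ℕ) : rep k (j, false) * (1 + Xp j 1)
    = 1 + MonoidAlgebra.single (ofList (List.replicate k j)) ((-1) ^ (k+1)) := by
  induction k with
  | zero =>
      rw [rep, Finset.range_zero, Finset.sum_empty, zero_mul, List.replicate_zero, ofList_nil,
        MonoidAlgebra.one_def, ← MonoidAlgebra.single_add]
      norm_num
  | succ k ih =>
      rw [rep, Finset.sum_range_succ, ← rep, add_mul, ih]
      have hc : cf false k = (-1)^k := by simp [cf]
      rw [hc, mul_add, mul_one]
      have hx : MonoidAlgebra.single (ofList (List.replicate k j)) ((-1)^k : ℤ) * Xp j 1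
          = MonoidAlgebra.single (ofList (List.replicate (k+1) j)) ((-1)^k : ℤ) := by
        rw [Xp, MonoidAlgebra.single_mul_single, mul_one, ← ofList_append, ← List.replicate_add]
      rw [hx]
      have hz : MonoidAlgebra.single (ofList (List.replicate k j)) ((-1:ℤ)^(k+1))
          + MonoidAlgebra.single (ofList (List.replicate k j)) ((-1:ℤ)^k) = 0 := by
        rw [← MonoidAlgebra.single_add, sign_sum, MonoidAlgebra.single_zero]
      have hp : ((-1:ℤ)^(k+1+1)) = (-1:ℤ)^k := by rw [pow_succ, pow_succ]; ring
      rw [hp]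
      calc 1 + MonoidAlgebra.single (ofList (List.replicate k j)) ((-1:ℤ)^(k+1))
            + (MonoidAlgebra.single (ofList (List.replicate k j)) ((-1:ℤ)^k)
              + MonoidAlgebra.single (ofList (List.replicate (k+1) j)) ((-1:ℤ)^k))
          = 1 + (MonoidAlgebra.single (ofList (List.replicate k j)) ((-1:ℤ)^(k+1))
              + MonoidAlgebra.single (ofList (List.replicate k j)) ((-1:ℤ)^k))
              + MonoidAlgebra.single (ofList (List.replicate (k+1) j)) ((-1:ℤ)^k) := by abel
        _ = 1 + MonoidAlgebra.single (ofList (List.replicate (k+1) j)) ((-1:ℤ)^k) := by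
              rw [hz, add_zero]

lemma rep_true {k : ℕ} (h2 : 2 ≤ k) (j : γ) : rep k (j, true) = 1 + Xp j 1 := by
  rw [rep]
  rw [← Finset.sum_subset (Finset.range_subset_range.mpr h2) (fun a _ ha => by
    have h1 : ¬ a ≤ 1 := by simp only [Finset.mem_range] at ha; omega
    simp [cf, h1])]
  rw [Finset.sum_range_succ, Finset.sum_range_one]
  simp [cf, Xp, MonoidAlgebra.one_def, ofList_nil]

lemma slow_single_replicate (k : ℕ) (j : γ) (c : ℤ) :
    Slow k (MonoidAlgebra.single (ofList (List.replicate k j)) c) := by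
  intro w hw
  rw [MonoidAlgebra.coeff_single, Finsupp.single_apply, if_neg]
  intro heq
  have : (List.replicate k j).length < k := by
    show (FreeMonoid.ofList (List.replicate k j)).length < k
    rw [heq]; exact hw
  simp at this

/-- The Magnus unit attached to a generator. -/
noncomputable def uu (k : ℕ) (h2 : 2 ≤ k) (j : γ) : (A γ k)ˣ where
  val := mkA k (rep k (j, true))
  inv := mkA k (rep k (j, false))
  val_inv := by
    rw [← map_mul, rep_true h2, ← map_one (mkA (γ := γ) k), mkA_eq_iff, geom_mul,
      add_sub_cancel_left]
    exact slow_single_replicate k j _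
  inv_val := by
    rw [← map_mul, rep_true h2, ← map_one (mkA (γ := γ) k), mkA_eq_iff, geom_mul',
      add_sub_cancel_left]
    exact slow_single_replicate k j _
/-- Magnus expansion of a signed word: product of the series of its letters. -/
noncomputable def PM (k : ℕ) (L : List (γ × Bool)) : M γ := (L.map (rep k)).prod

lemma PM_nil (k : ℕ) : PM (γ := γ) k [] = 1 := rfl

lemma PM_cons (k : ℕ) (p : γ × Bool) (L : List (γ × Bool)) :
    PM k (p :: L) = rep k p * PM k L := by simp [PM]

lemma PM_append (k : ℕ) (L1 L2 : List (γ × Bool)) :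
    PM k (L1 ++ L2) = PM k L1 * PM k L2 := by simp [PM]

lemma coeff_single_mul (w : List γ) (r : ℤ) (f : M γ) (u : List γ) :
    (MonoidAlgebra.single (ofList w) r * f).coeff (ofList u)
      = if w <+: u then r * f.coeff (ofList (u.drop w.length)) else 0 := by
  split_ifs with h
  · obtain ⟨t, rfl⟩ := h
    rw [show (w ++ t).drop w.length = t from List.drop_left]
    apply MonoidAlgebra.single_mul_apply_aux
    intro a _
    constructor
    · intro ha
      have h2 := congrArg toList ha
      rw [toList_mul, toList_ofList, toList_ofList] at h2
      have h3 := List.append_cancel_left h2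
      rw [← h3, ofList_toList]
    · rintro rfl
      rfl
  · apply MonoidAlgebra.single_mul_apply_of_not_exists_mul
    rintro ⟨d, hd⟩
    apply h
    refine ⟨toList d, ?_⟩
    have h2 := congrArg toList hd
    rw [toList_mul, toList_ofList, toList_ofList] at h2
    exact h2.symm

lemma PM_support (k : ℕ) : ∀ (L : List (γ × Bool)) (u : List γ),
    (PM k L).coeff (ofList u) ≠ 0 →
    ∃ as : List ℕ, as.length = L.length ∧
      u = (as.zip (L.map Prod.fst)).flatMap (fun p => List.replicate p.1 p.2) := by
  intro L
  induction L with
  | nil =>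
      intro u hu
      refine ⟨[], rfl, ?_⟩
      rw [PM_nil, MonoidAlgebra.one_def, MonoidAlgebra.coeff_single, Finsupp.single_apply] at hu
      split_ifs at hu with h
      · have := congrArg toList h
        rw [toList_ofList] at this
        simpa using this.symm
      · exact absurd rfl hu
  | cons p L ih =>
      intro u hu
      rw [PM_cons, rep, Finset.sum_mul, MonoidAlgebra.coeff_sum, Finsupp.finset_sum_apply] at hu
      obtain ⟨a, _, ha⟩ := Finset.exists_ne_zero_of_sum_ne_zero hu
      rw [coeff_single_mul] at ha
      split_ifs at ha with hpre
      · have hPM : (PM k L).coeff (ofList (u.drop (List.replicate a p.1).length)) ≠ 0 :=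
          fun h0 => ha (by rw [h0, mul_zero])
        obtain ⟨as, hlen, hu'⟩ := ih _ hPM
        obtain ⟨t, rfl⟩ := hpre
        rw [List.drop_left] at hu'
        refine ⟨a :: as, by simp [hlen], ?_⟩
        rw [List.map_cons, List.zip_cons_cons, List.flatMap_cons, ← hu']
      · exact absurd rfl ha

lemma exists_two_le (as : List ℕ) (h : as.length < as.sum) : ∃ a ∈ as, 2 ≤ a := by
  by_contra hc
  push_neg at hc
  have := List.sum_le_card_nsmul as 1 (fun x hx => by have := hc x hx; omega)
  simp at this
  omega

lemma coeff_eq_zero (k : ℕ) (L : List (γ × Bool)) (u : List γ) (hu : u.Chain' (· ≠ ·))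
    (hlen : L.length < u.length) : (PM k L).coeff (ofList u) = 0 := by
  by_contra h
  obtain ⟨as, hlen', hu'⟩ := PM_support k L u h
  have hzlen : as.length ≤ (L.map Prod.fst).length := by simp [hlen']
  have hzl : (as.zip (L.map Prod.fst)).map Prod.fst = as := List.map_fst_zip hzlen
  have hsum : u.length = as.sum := by
    rw [hu', List.length_flatMap]
    have hfun : (List.length ∘ fun p : ℕ × γ => List.replicate p.1 p.2) = Prod.fst := by
      funext p
      exact List.length_replicate
    simp only [List.length_replicate]
    exact congrArg List.sum hzl
  obtain ⟨a, haa, h2a⟩ := exists_two_le as (by omega)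
  have hamem : a ∈ (as.zip (L.map Prod.fst)).map Prod.fst := by rw [hzl]; exact haa
  obtain ⟨pr, hpr, hpr1⟩ := List.mem_map.mp hamem
  obtain ⟨s, t, hst⟩ := List.append_of_mem hpr
  have hinfix : List.replicate pr.1 pr.2 <:+: u := by
    rw [hu', hst]
    refine ⟨s.flatMap (fun p => List.replicate p.1 p.2),
      t.flatMap (fun p => List.replicate p.1 p.2), ?_⟩
    rw [List.flatMap_append, List.flatMap_cons]
    simp [List.append_assoc]
  obtain ⟨a', ha'⟩ : ∃ a', pr.1 = a' + 2 := ⟨pr.1 - 2, by omega⟩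
  rw [ha', show a' + 2 = (a' + 1) + 1 from rfl, List.replicate_succ, List.replicate_succ]
    at hinfix
  have hch := hu.infix hinfix
  exact (List.isChain_cons_cons.mp hch).1 rfl

/-- The product of the signs of a signed word, as `±1 ∈ ℤ`. -/
def eps (L : List (γ × Bool)) : ℤ := (L.map (fun p => if p.2 then (1:ℤ) else -1)).prod

lemma eps_ne_zero : ∀ L : List (γ × Bool), eps L ≠ 0 := by
  intro L
  induction L with
  | nil => simp [eps]
  | cons p L ih =>
      have : eps (p :: L) = (if p.2 then (1:ℤ) else -1) * eps L := by simp [eps]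
      rw [this]
      apply mul_ne_zero _ ih
      cases p.2 <;> norm_num

lemma coeff_PM {k : ℕ} (h2 : 2 ≤ k) : ∀ L : List (γ × Bool),
    (L.map Prod.fst).Chain' (· ≠ ·) →
    (PM k L).coeff (ofList (L.map Prod.fst)) = eps L := by
  intro L
  induction L with
  | nil =>
      intro _
      rw [PM_nil, MonoidAlgebra.one_def, MonoidAlgebra.coeff_single, Finsupp.single_apply, eps]
      simp [ofList_nil]
  | cons p L ih =>
      intro hc
      rw [List.map_cons] at hc ⊢
      rw [PM_cons, rep, Finset.sum_mul, MonoidAlgebra.coeff_sum, Finsupp.finset_sum_apply,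
        Finset.sum_eq_single 1]
      · rw [coeff_single_mul, if_pos (by exact ⟨L.map Prod.fst, by simp⟩)]
        rw [List.length_replicate]
        have hdrop : (p.1 :: L.map Prod.fst).drop 1 = L.map Prod.fst := rfl
        rw [hdrop, ih hc.tail]
        have : eps (p :: L) = (if p.2 then (1:ℤ) else -1) * eps L := by simp [eps]
        rw [this]
        cases hp : p.2 <;> simp [cf]
      · intro a _ hne
        rw [coeff_single_mul]
        match a, hne with
        | 0, _ =>
            rw [if_pos (by exact List.nil_prefix)]
            rw [List.replicate_zero, List.length_nil, List.drop_zero]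
            rw [coeff_eq_zero k L _ hc (by simp), mul_zero]
        | 1, hne => exact absurd rfl hne
        | (a+2), _ =>
            rw [if_neg]
            intro hpre
            rw [show a + 2 = (a+1)+1 from rfl, List.replicate_succ] at hpre
            obtain ⟨-, hpre2⟩ := List.cons_prefix_cons.mp hpre
            rw [List.replicate_succ] at hpre2
            cases hL : L.map Prod.fst with
            | nil => rw [hL] at hpre2; exact absurd (List.prefix_nil.mp hpre2) (by simp)
            | cons q rest =>
                rw [hL] at hpre2 hc
                obtain ⟨heq, -⟩ := List.cons_prefix_cons.mp hpre2
                exact (List.isChain_cons_cons.mp hc).1 heq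
      · intro h1
        exact absurd (Finset.mem_range.mpr (by omega)) h1
/-- Units congruent to `1` modulo words of length `≥ j`. -/
noncomputable def GS (k j : ℕ) : Subgroup (A γ k)ˣ where
  carrier := {u | ∃ x : M γ, Slow j x ∧ mkA k x = (u : A γ k) - 1}
  one_mem' := ⟨0, Slow.zero j, by rw [map_zero, Units.val_one, sub_self]⟩
  mul_mem' := by
    rintro u v ⟨x, hx, hxe⟩ ⟨y, hy, hye⟩
    refine ⟨x + y + x * y,
      (hx.add hy).add ((hx.mul hy).anti (Nat.le_add_right j j)), ?_⟩
    rw [map_add, map_add, map_mul, hxe, hye, Units.val_mul]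
    have hh : ((↑u : A γ k) - 1) * ((↑v : A γ k) - 1) = ↑u * ↑v - ↑u - ↑v + 1 := by
      rw [sub_mul, one_mul, mul_sub, mul_one]; abel
    rw [hh]; abel
  inv_mem' := by
    rintro u ⟨x, hx, he⟩
    obtain ⟨r, hr⟩ := mkA_surjective k ((u⁻¹ : (A γ k)ˣ) : A γ k)
    refine ⟨r * (-x), Slow.mul_left r hx.neg, ?_⟩
    rw [map_mul, map_neg, hr, he, neg_sub, mul_sub, mul_one, Units.inv_mul]

lemma GS_commutator {k p q : ℕ} {u v : (A γ k)ˣ} (hu : u ∈ GS k p) (hv : v ∈ GS k q) :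
    ⁅u, v⁆ ∈ GS k (p + q) := by
  obtain ⟨x, hx, hxe⟩ := hu
  obtain ⟨y, hy, hye⟩ := hv
  obtain ⟨r, hr⟩ := mkA_surjective k
    (((u⁻¹ : (A γ k)ˣ) : A γ k) * ((v⁻¹ : (A γ k)ˣ) : A γ k))
  refine ⟨(x * y - y * x) * r,
    ((hx.mul hy).sub (by have := hy.mul hx; rwa [Nat.add_comm] at this)).mul_right r, ?_⟩
  rw [map_mul, map_sub, map_mul, map_mul, hxe, hye, hr]
  have hcoe : (↑⁅u,v⁆ : A γ k) = ↑u * ↑v * ↑u⁻¹ * ↑v⁻¹ := by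
    rw [commutatorElement_def, Units.val_mul, Units.val_mul, Units.val_mul]
  rw [hcoe]
  have e1 : ((↑u : A γ k) - 1) * ((↑v : A γ k) - 1) = ↑u * ↑v - ↑u - ↑v + 1 := by
    rw [sub_mul, one_mul, mul_sub, mul_one]; abel
  have e2 : ((↑v : A γ k) - 1) * ((↑u : A γ k) - 1) = ↑v * ↑u - ↑v - ↑u + 1 := by
    rw [sub_mul, one_mul, mul_sub, mul_one]; abel
  have h1 : (((↑u : A γ k) - 1) * (↑v - 1) - (↑v - 1) * (↑u - 1)) = ↑u * ↑v - ↑v * ↑u := by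
    rw [e1, e2]; abel
  rw [h1, sub_mul]
  have h2 : (↑v : A γ k) * ↑u * (((u⁻¹ : (A γ k)ˣ) : A γ k) * ((v⁻¹ : (A γ k)ˣ) : A γ k)) = 1 := by
    rw [mul_assoc (↑v : A γ k), ← mul_assoc (↑u : A γ k), Units.mul_inv, one_mul, Units.mul_inv]
  have h3 : (↑u : A γ k) * ↑v * (((u⁻¹ : (A γ k)ˣ) : A γ k) * ((v⁻¹ : (A γ k)ˣ) : A γ k))
      = (↑u : A γ k) * ↑v * ((u⁻¹ : (A γ k)ˣ) : A γ k) * ((v⁻¹ : (A γ k)ˣ) : A γ k) :=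
    (mul_assoc _ _ _).symm
  rw [h2, h3]

lemma lcs_le {ι : Type*} {k : ℕ} (Φ : FreeGroup ι →* (A γ k)ˣ)
    (hbase : ∀ i, Φ (FreeGroup.of i) ∈ GS k 1) :
    ∀ m, Subgroup.lowerCentralSeries (⊤ : Subgroup (FreeGroup ι)) m ≤ (GS (γ := γ) k (m+1)).comap Φ := by
  have hall : ∀ g, Φ g ∈ GS k 1 := by
    intro g
    induction g using FreeGroup.induction_on with
    | C1 => rw [map_one]; exact one_mem _
    | of i => exact hbase i
    | inv_of i h => rw [map_inv]; exact inv_mem h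
    | mul x y hx hy => rw [map_mul]; exact mul_mem hx hy
  intro m
  induction m with
  | zero => intro g _; exact hall g
  | succ m ih =>
      rw [Subgroup.lowerCentralSeries_succ]
      apply Subgroup.commutator_le.mpr
      intro g hg h _
      show Φ ⁅g, h⁆ ∈ GS k (m + 1 + 1)
      rw [map_commutatorElement]
      exact GS_commutator (ih hg) (hall h)

lemma eq_one_of_mem_GS {k : ℕ} {u : (A γ k)ˣ} (h : u ∈ GS k k) : u = 1 := by
  obtain ⟨x, hx, he⟩ := h
  have h0 : mkA (γ := γ) k x = mkA k 0 := by
    rw [mkA_eq_iff, sub_zero]; exact hx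
  rw [map_zero] at h0
  rw [h0] at he
  apply Units.ext
  rw [Units.val_one]
  have := he.symm
  rwa [sub_eq_zero] at this
section FreeGroupSide

variable {ι : Type*} [DecidableEq ι]

/-- Doubling a signed letter into two signed letters over the doubled alphabet. -/
def dbl (p : ι × Bool) : List ((ι × Bool) × Bool) :=
  if p.2 then [((p.1, true), true), ((p.1, false), true)]
  else [((p.1, false), false), ((p.1, true), false)]

lemma dbl_length (p : ι × Bool) : (dbl p).length = 2 := by
  rcases p with ⟨i, b⟩; cases b <;> rfl

lemma flatMap_dbl_length (L : List (ι × Bool)) : (L.flatMap dbl).length = 2 * L.length := by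
  induction L with
  | nil => rfl
  | cons p L ih =>
      rw [List.flatMap_cons, List.length_append, ih, dbl_length, List.length_cons]
      omega

lemma chain_dbl : ∀ {L : List (ι × Bool)},
    L.Chain' (fun p q => p.1 = q.1 → p.2 = q.2) →
    ((L.flatMap dbl).map Prod.fst).Chain' (· ≠ ·) := by
  intro L
  induction L with
  | nil => intro _; exact List.IsChain.nil
  | cons p L ih =>
      intro hc
      rw [List.flatMap_cons, List.map_append]
      apply List.isChain_append.mpr
      refine ⟨?_, ih hc.tail, ?_⟩
      · rcases p with ⟨i, b⟩
        cases b <;> simp [dbl]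
      · intro x hx y hy
        cases L with
        | nil => simp [dbl] at hy
        | cons q L' =>
            rw [List.flatMap_cons, List.map_append] at hy
            have hy' : y ∈ ((dbl q).map Prod.fst).head? := by
              rcases q with ⟨i', b'⟩
              cases b' <;> simpa [dbl] using hy
            have hpq : p.1 = q.1 → p.2 = q.2 := (List.isChain_cons_cons.mp hc).1
            rcases p with ⟨i, b⟩
            rcases q with ⟨i', b'⟩
            cases b <;> cases b' <;>
              simp [dbl] at hx hy' <;>
              subst hx <;> subst hy' <;>
              simp_all
  -- end

lemma chain_toWord (g : FreeGroup ι) :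
    g.toWord.Chain' (fun p q => p.1 = q.1 → p.2 = q.2) := by
  show List.IsChain _ _
  rw [List.isChain_iff_getElem]
  intro i h
  intro hfst
  by_contra hsnd
  have hi1 : i + 1 < g.toWord.length := by omega
  have hi : i < g.toWord.length := by omega
  set x := g.toWord.get ⟨i, hi⟩ with hx
  set y := g.toWord.get ⟨i + 1, hi1⟩ with hy
  have hyx : y = (x.1, !x.2) := by
    have h1 : y.1 = x.1 := hfst.symm
    have h2 : y.2 = !x.2 := by
      cases hb : x.2 <;> cases hb' : y.2 <;> simp_all
    rw [← h1, ← h2]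
  have hdrop1 : g.toWord.drop i = x :: g.toWord.drop (i + 1) := by
    rw [List.drop_eq_getElem_cons hi]
    rw [hx]
    rfl
  have hdrop2 : g.toWord.drop (i + 1) = y :: g.toWord.drop (i + 2) := by
    rw [List.drop_eq_getElem_cons hi1]
    rw [hy]
    rfl
  have hdecomp : g.toWord = g.toWord.take i ++ x :: y :: g.toWord.drop (i + 2) := by
    conv_lhs => rw [← List.take_append_drop i g.toWord]
    rw [hdrop1, hdrop2]
  rw [hyx] at hdecomp
  refine FreeGroup.reduce.not (L₁ := g.toWord) (L₂ := g.toWord.take i)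
    (L₃ := g.toWord.drop (i + 2)) (x := x.1) (b := x.2) ?_
  rw [FreeGroup.reduce_toWord]
  exact hdecomp

lemma uu_mem_GS1 {k : ℕ} (h2 : 2 ≤ k) (j : ι × Bool) :
    uu (γ := ι × Bool) k h2 j ∈ GS k 1 := by
  refine ⟨rep k (j, true) - 1, ?_, by rw [map_sub, map_one]; rfl⟩
  intro w hw
  have hw0 : w = 1 := by
    have : w.length = 0 := by omega
    exact FreeMonoid.length_eq_zero.mp this
  subst hw0
  rw [MonoidAlgebra.coeff_sub, Finsupp.sub_apply]
  have hone : (1 : M (ι × Bool)).coeff (1 : FreeMonoid (ι × Bool)) = 1 := by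
    rw [MonoidAlgebra.one_def, MonoidAlgebra.coeff_single, Finsupp.single_eq_same]
  have hrep : (rep k (j, true)).coeff (1 : FreeMonoid (ι × Bool)) = 1 := by
    rw [rep, MonoidAlgebra.coeff_sum, Finsupp.finset_sum_apply, Finset.sum_eq_single 0]
    · rw [List.replicate_zero, ofList_nil, MonoidAlgebra.coeff_single, Finsupp.single_eq_same]
      rfl
    · intro a _ ha
      rw [MonoidAlgebra.coeff_single, Finsupp.single_apply, if_neg]
      intro heq
      have hli : (List.replicate a j).length = 0 := congrArg FreeMonoid.length heq
      exact ha (by simpa using hli)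
    · intro h0
      exact absurd (Finset.mem_range.mpr (by omega)) h0
  rw [hone, hrep, sub_self]

lemma magnus_val {k : ℕ} (h2 : 2 ≤ k) (L : List (ι × Bool)) :
    (((L.map fun x => cond x.2 (uu (γ := ι × Bool) k h2 (x.1, true) * uu k h2 (x.1, false))
        (uu (γ := ι × Bool) k h2 (x.1, true) * uu k h2 (x.1, false))⁻¹).prod :
        (A (ι × Bool) k)ˣ) : A (ι × Bool) k)
      = mkA k (PM k (L.flatMap dbl)) := by
  induction L with
  | nil =>
      rw [List.map_nil, List.prod_nil, Units.val_one, List.flatMap_nil, PM_nil, map_one]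
  | cons p L ih =>
      rw [List.map_cons, List.prod_cons, Units.val_mul, ih, List.flatMap_cons, PM_append, map_mul]
      congr 1
      rcases p with ⟨i, b⟩
      cases b
      · show (((uu (γ := ι × Bool) k h2 (i, true) * uu k h2 (i, false))⁻¹ :
            (A (ι × Bool) k)ˣ) : A (ι × Bool) k) = _
        rw [mul_inv_rev, Units.val_mul]
        show mkA k (rep k ((i, false), false)) * mkA k (rep k ((i, true), false)) = _
        rw [← map_mul]
        congr 1
        show _ = PM k [((i, false), false), ((i, true), false)]
        rw [PM_cons, PM_cons, PM_nil, mul_one]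
      · show (((uu (γ := ι × Bool) k h2 (i, true) * uu k h2 (i, false)) :
            (A (ι × Bool) k)ˣ) : A (ι × Bool) k) = _
        rw [Units.val_mul]
        show mkA k (rep k ((i, true), true)) * mkA k (rep k ((i, false), true)) = _
        rw [← map_mul]
        congr 1
        show _ = PM k [((i, true), true), ((i, false), true)]
        rw [PM_cons, PM_cons, PM_nil, mul_one]

/-- **Magnus / residual nilpotence**: an element of a free group lying in every term of the
lower central series is trivial. -/
theorem eq_one_of_forall_lowerCentralSeries (g : FreeGroup ι)
    (hg : ∀ m, g ∈ Subgroup.lowerCentralSeries (⊤ : Subgroup (FreeGroup ι)) m) : g = 1 := by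
  by_contra hne
  have hLnil : g.toWord ≠ [] := fun h => hne (FreeGroup.toWord_eq_nil_iff.mp h)
  have hLpos : 0 < g.toWord.length := List.length_pos_iff.mpr hLnil
  set L : List (ι × Bool) := g.toWord with hL
  set k : ℕ := 2 * L.length + 1 with hk
  have h2 : 2 ≤ k := by omega
  set Φ : FreeGroup ι →* (A (ι × Bool) k)ˣ :=
    FreeGroup.lift (fun i => uu k h2 (i, true) * uu k h2 (i, false)) with hΦ
  have hbase : ∀ i, Φ (FreeGroup.of i) ∈ GS k 1 := by
    intro i
    rw [hΦ, FreeGroup.lift_apply_of]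
    exact mul_mem (uu_mem_GS1 h2 _) (uu_mem_GS1 h2 _)
  have hmem := lcs_le Φ hbase (k - 1) (hg (k - 1))
  rw [Subgroup.mem_comap] at hmem
  have hk1 : k - 1 + 1 = k := by omega
  rw [hk1] at hmem
  have hone : Φ g = 1 := eq_one_of_mem_GS hmem
  have hval : ((Φ g : (A (ι × Bool) k)ˣ) : A (ι × Bool) k) = mkA k (PM k (L.flatMap dbl)) := by
    conv_lhs => rw [show g = FreeGroup.mk L from (FreeGroup.mk_toWord).symm]
    rw [hΦ, FreeGroup.lift_mk]
    exact magnus_val h2 L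
  rw [hone, Units.val_one] at hval
  have h1 : mkA k (PM k (L.flatMap dbl)) = mkA k 1 := by rw [← hval, map_one]
  rw [mkA_eq_iff] at h1
  set w0 : List (ι × Bool) := (L.flatMap dbl).map Prod.fst with hw0
  have hlenw0 : w0.length = 2 * L.length := by
    rw [hw0, List.length_map, flatMap_dbl_length]
  have hshort : (ofList w0).length < k := by
    show w0.length < k
    omega
  have hzero := h1 (ofList w0) hshort
  rw [MonoidAlgebra.coeff_sub, Finsupp.sub_apply] at hzero
  have hcoeff : (PM k (L.flatMap dbl)).coeff (ofList w0) = eps (L.flatMap dbl) :=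
    coeff_PM h2 _ (chain_dbl (chain_toWord g))
  have hone' : (1 : M (ι × Bool)).coeff (ofList w0) = 0 := by
    rw [MonoidAlgebra.one_def, MonoidAlgebra.coeff_single, Finsupp.single_apply, if_neg]
    intro heq
    have hlen1 := congrArg FreeMonoid.length heq
    rw [FreeMonoid.length_one] at hlen1
    have : w0.length = 0 := hlen1.symm
    omega
  rw [hcoeff, hone'] at hzero
  rw [sub_zero] at hzero
  exact eps_ne_zero _ hzero

end FreeGroupSide
end JM

/-- For a finitely generated free group `π`, the Johnson filtration of `Aut(π)` is
exhaustive: the intersection of the kernels `J(k)` of the maps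
`Aut(π) → Aut(π/Γ_k(π))` is trivial.  An automorphism `e` lies in `J(k)` iff
`e x * x⁻¹ ∈ Γ_k(π)` for all `x`. -/
theorem johnson_filtration_aut_free_exhaustive (n : ℕ) :
    (⋂ k : ℕ, {e : MulAut (FreeGroup (Fin n)) |
      ∀ x : FreeGroup (Fin n), e x * x⁻¹ ∈ Subgroup.lowerCentralSeries (⊤ : Subgroup (FreeGroup (Fin n))) k})
      = {1} := by
  ext e
  simp only [Set.mem_iInter, Set.mem_setOf_eq, Set.mem_singleton_iff]
  constructor
  · intro h
    have hx : ∀ x : FreeGroup (Fin n), e x = x := by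
      intro x
      have h1 : e x * x⁻¹ = 1 :=
        JM.eq_one_of_forall_lowerCentralSeries _ (fun m => h m x)
      exact mul_inv_eq_one.mp h1
    exact DFunLike.ext _ _ fun x => (hx x).trans rfl
  · rintro rfl k x
    have h1 : (1 : MulAut (FreeGroup (Fin n))) x * x⁻¹ = 1 := by simp
    rw [h1]
    exact Subgroup.one_mem _
end

section
/- In the free group F₂ = ⟨x,y⟩, the commutator xyx⁻¹y⁻¹ lies in the commutator subgroup but is not a proper power: it is not of the form wⁿ for any word w and any n ≥ 2. -/
/-- The Heisenberg group over `ZMod m`, encoded as triples. -/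
@[ext] structure Heis (m : ℕ) where
  a : ZMod m
  b : ZMod m
  c : ZMod m

namespace Heis

variable {m : ℕ}

instance : Mul (Heis m) := ⟨fun g h => ⟨g.a + h.a, g.b + h.b, g.c + h.c + g.a * h.b⟩⟩
instance : One (Heis m) := ⟨⟨0, 0, 0⟩⟩
instance : Inv (Heis m) := ⟨fun g => ⟨-g.a, -g.b, -g.c + g.a * g.b⟩⟩

@[simp] lemma mul_a (g h : Heis m) : (g * h).a = g.a + h.a := rfl
@[simp] lemma mul_b (g h : Heis m) : (g * h).b = g.b + h.b := rfl
@[simp] lemma mul_c (g h : Heis m) : (g * h).c = g.c + h.c + g.a * h.b := rfl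
@[simp] lemma one_a : (1 : Heis m).a = 0 := rfl
@[simp] lemma one_b : (1 : Heis m).b = 0 := rfl
@[simp] lemma one_c : (1 : Heis m).c = 0 := rfl
@[simp] lemma inv_a (g : Heis m) : g⁻¹.a = -g.a := rfl
@[simp] lemma inv_b (g : Heis m) : g⁻¹.b = -g.b := rfl
@[simp] lemma inv_c (g : Heis m) : g⁻¹.c = -g.c + g.a * g.b := rfl

instance : Group (Heis m) where
  mul_assoc g h k := by ext <;> simp <;> ring
  one_mul g := by ext <;> simp
  mul_one g := by ext <;> simp
  inv_mul_cancel g := by ext <;> simp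

lemma pow_def (g : Heis m) (k : ℕ) :
    g ^ k = ⟨(k : ZMod m) * g.a, (k : ZMod m) * g.b,
      (k : ZMod m) * g.c + ((k.choose 2 : ℕ) : ZMod m) * g.a * g.b⟩ := by
  induction k with
  | zero => ext <;> simp
  | succ k ih =>
      rw [pow_succ, ih]
      ext <;> simp <;> push_cast [Nat.choose_succ_succ, Nat.choose_one_right] <;> ring

end Heis

open scoped commutatorElement

/-- In the free group on two generators `x`, `y`, the commutator `x y x⁻¹ y⁻¹` lies in the
commutator subgroup but is not a proper power `wⁿ` with `n ≥ 2`. -/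
theorem freeGroup_commutator_mem_commutator_not_properPower :
    (FreeGroup.of (0 : Fin 2) * FreeGroup.of 1 * (FreeGroup.of 0)⁻¹ * (FreeGroup.of 1)⁻¹
        ∈ commutator (FreeGroup (Fin 2))) ∧
      ∀ (w : FreeGroup (Fin 2)) (n : ℕ), 2 ≤ n →
        w ^ n ≠ FreeGroup.of (0 : Fin 2) * FreeGroup.of 1 *
          (FreeGroup.of 0)⁻¹ * (FreeGroup.of 1)⁻¹ := by
  constructor
  · have : FreeGroup.of (0 : Fin 2) * FreeGroup.of 1 * (FreeGroup.of 0)⁻¹ * (FreeGroup.of 1)⁻¹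
        = ⁅FreeGroup.of (0 : Fin 2), FreeGroup.of 1⁆ := by
      simp [commutatorElement_def, mul_assoc]
    rw [this, commutator_def]
    exact Subgroup.commutator_mem_commutator (Subgroup.mem_top _) (Subgroup.mem_top _)
  · intro w n hn h
    have hm : (n : ZMod (n ^ 2)) ≠ 0 := by
      intro h0
      have hd := (ZMod.natCast_eq_zero_iff n (n ^ 2)).mp h0
      have h1 : n ^ 2 ≤ n := Nat.le_of_dvd (by omega) hd
      have : n < n ^ 2 := by nlinarith
      omega
    set φ : FreeGroup (Fin 2) →* Heis (n ^ 2) :=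
      FreeGroup.lift (fun i => if i = 0 then ⟨1, 0, 0⟩ else ⟨0, 1, 0⟩)
    have hφ : (φ w) ^ n = ⟨0, 0, 1⟩ := by
      rw [← map_pow, h]
      simp only [map_mul, map_inv, φ, FreeGroup.lift_apply_of]
      norm_num
      ext <;> simp
    rw [Heis.pow_def] at hφ
    have ha : (n : ZMod (n ^ 2)) * (φ w).a = 0 := congrArg Heis.a hφ
    have hc : (n : ZMod (n ^ 2)) * (φ w).c
        + ((n.choose 2 : ℕ) : ZMod (n ^ 2)) * (φ w).a * (φ w).b = 1 := congrArg Heis.c hφ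
    have hc2 := congrArg (fun t => (n : ZMod (n ^ 2)) * t) hc
    have hnn : (n : ZMod (n ^ 2)) * (n : ZMod (n ^ 2)) = 0 := by
      have : ((n ^ 2 : ℕ) : ZMod (n ^ 2)) = 0 := ZMod.natCast_self _
      push_cast at this
      linear_combination this
    have : (n : ZMod (n ^ 2)) = 0 := by
      calc (n : ZMod (n ^ 2))
          = (n : ZMod (n ^ 2)) * ((n : ZMod (n ^ 2)) * (φ w).c
            + ((n.choose 2 : ℕ) : ZMod (n ^ 2)) * (φ w).a * (φ w).b) := by rw [hc]; ring
        _ = ((n : ZMod (n ^ 2)) * (n : ZMod (n ^ 2))) * (φ w).c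
            + ((n.choose 2 : ℕ) : ZMod (n ^ 2)) * ((n : ZMod (n ^ 2)) * (φ w).a) * (φ w).b := by
              ring
        _ = 0 := by rw [hnn, ha]; ring
    exact hm this
end

section
/- For the free group F on generators x₁,…,x_{2g} (g ≥ 1), the element c = [x₁,x₂][x₃,x₄]⋯[x_{2g−1},x_{2g}] lies in Γ₁(F) = [F,F] but not in Γ₂(F) = [F,[F,F]]. -/
open scoped commutatorElement

@[ext] structure Heis_s18 where
  x : ℤ
  y : ℤ
  z : ℤ

namespace Heis_s18

instance : Mul Heis_s18 := ⟨fun a b => ⟨a.x + b.x, a.y + b.y, a.z + b.z + a.x * b.y⟩⟩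
instance : One Heis_s18 := ⟨⟨0, 0, 0⟩⟩
instance : Inv Heis_s18 := ⟨fun a => ⟨-a.x, -a.y, -a.z + a.x * a.y⟩⟩

@[simp] lemma mul_x (a b : Heis_s18) : (a * b).x = a.x + b.x := rfl
@[simp] lemma mul_y (a b : Heis_s18) : (a * b).y = a.y + b.y := rfl
@[simp] lemma mul_z (a b : Heis_s18) : (a * b).z = a.z + b.z + a.x * b.y := rfl
@[simp] lemma one_x : (1 : Heis_s18).x = 0 := rfl
@[simp] lemma one_y : (1 : Heis_s18).y = 0 := rfl
@[simp] lemma one_z : (1 : Heis_s18).z = 0 := rfl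
@[simp] lemma inv_x (a : Heis_s18) : (a⁻¹).x = -a.x := rfl
@[simp] lemma inv_y (a : Heis_s18) : (a⁻¹).y = -a.y := rfl
@[simp] lemma inv_z (a : Heis_s18) : (a⁻¹).z = -a.z + a.x * a.y := rfl

instance : Group Heis_s18 where
  mul_assoc a b c := by ext <;> simp <;> ring
  one_mul a := by ext <;> simp
  mul_one a := by ext <;> simp
  inv_mul_cancel a := by ext <;> simp <;> ring

lemma comm_def (a b : Heis_s18) : ⁅a, b⁆ = ⟨0, 0, a.x * b.y - b.x * a.y⟩ := by
  show a * b * a⁻¹ * b⁻¹ = _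
  ext <;> simp <;> ring

lemma central_of (u : Heis_s18) (hx : u.x = 0) (hy : u.y = 0) : u ∈ Subgroup.center Heis_s18 := by
  rw [Subgroup.mem_center_iff]
  intro v
  ext <;> simp [hx, hy] <;> ring

lemma lcs_two : (⊤ : Subgroup Heis_s18).lowerCentralSeries 2 = ⊥ := by
  apply lowerCentralSeries_succ_eq_bot
  rw [Subgroup.top_lowerCentralSeries_one, commutator_def, Subgroup.commutator_le]
  intro a _ b _
  exact central_of _ (by simp [comm_def]) (by simp [comm_def])

end Heis_s18

/-- The surface boundary relator `c = [x₁,x₂] ⋯ [x_{2g-1},x_{2g}]` of a genus-`g` surface,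
as an element of the free group on `2g` generators. -/
noncomputable def surfaceRelator (g : ℕ) : FreeGroup (Fin (2 * g)) :=
  ((List.finRange g).map fun (i : Fin g) =>
    ⁅FreeGroup.of (⟨2 * (i : ℕ), by have := i.isLt; omega⟩ : Fin (2 * g)),
      FreeGroup.of (⟨2 * (i : ℕ) + 1, by have := i.isLt; omega⟩ : Fin (2 * g))⁆).prod

/-- The surface relator lies in `Γ₁(F) = [F, F]` but not in `Γ₂(F) = [F, [F, F]]`. -/
theorem surfaceRelator_mem_lcs_one_not_mem_lcs_two (g : ℕ) (hg : 1 ≤ g) :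
    surfaceRelator g ∈ (⊤ : Subgroup (FreeGroup (Fin (2 * g)))).lowerCentralSeries 1 ∧
      surfaceRelator g ∉ (⊤ : Subgroup (FreeGroup (Fin (2 * g)))).lowerCentralSeries 2 := by
  constructor
  · rw [Subgroup.top_lowerCentralSeries_one, commutator_def]
    apply Subgroup.list_prod_mem
    intro x hx
    simp only [List.mem_map] at hx
    obtain ⟨i, -, rfl⟩ := hx
    exact Subgroup.commutator_mem_commutator (Subgroup.mem_top _) (Subgroup.mem_top _)
  · intro h
    obtain ⟨g', rfl⟩ : ∃ g', g = g' + 1 := ⟨g - 1, by omega⟩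
    set f : Fin (2 * (g' + 1)) → Heis_s18 := fun i =>
      if (i : ℕ) = 0 then ⟨1, 0, 0⟩ else if (i : ℕ) = 1 then ⟨0, 1, 0⟩ else 1 with hf
    set φ := FreeGroup.lift f with hφdef
    have hφ : φ (surfaceRelator (g' + 1)) = ⟨0, 0, 1⟩ := by
      unfold surfaceRelator
      rw [map_list_prod, List.map_map, List.finRange_succ, List.map_cons,
        List.prod_cons, List.map_map]
      have h1 : ((List.finRange g').map
          ((φ ∘ fun (i : Fin (g' + 1)) =>
            ⁅FreeGroup.of (⟨2 * (i : ℕ), by have := i.isLt; omega⟩ : Fin (2 * (g' + 1))),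
              FreeGroup.of (⟨2 * (i : ℕ) + 1, by have := i.isLt; omega⟩ :
                Fin (2 * (g' + 1)))⁆) ∘ Fin.succ)).prod = 1 := by
        apply List.prod_eq_one
        intro x hx
        simp only [List.mem_map] at hx
        obtain ⟨j, -, rfl⟩ := hx
        simp only [Function.comp_apply, map_commutatorElement, hφdef, FreeGroup.lift_apply_of]
        have e1 : f ⟨2 * ((Fin.succ j : Fin (g' + 1)) : ℕ), by omega⟩ = 1 := by
          rw [hf]; simp only [Fin.val_succ]
          rw [if_neg (by omega), if_neg (by omega)]
        have e2 : f ⟨2 * ((Fin.succ j : Fin (g' + 1)) : ℕ) + 1, by omega⟩ = 1 := by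
          rw [hf]; simp only [Fin.val_succ]
          rw [if_neg (by omega), if_neg (by omega)]
        rw [e1, e2]; simp
      rw [h1, mul_one]
      simp only [Function.comp_apply, map_commutatorElement, hφdef, FreeGroup.lift_apply_of]
      have e1 : f ⟨2 * ((0 : Fin (g' + 1)) : ℕ), by omega⟩ = ⟨1, 0, 0⟩ := by
        rw [hf]; simp
      have e2 : f ⟨2 * ((0 : Fin (g' + 1)) : ℕ) + 1, by omega⟩ = ⟨0, 1, 0⟩ := by
        rw [hf]; simp
      rw [e1, e2, Heis_s18.comm_def]
      norm_num
    have hmem : φ (surfaceRelator (g' + 1)) ∈ (⊤ : Subgroup Heis_s18).lowerCentralSeries 2 :=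
      lowerCentralSeries.map φ 2 (Subgroup.mem_map_of_mem φ h)
    rw [Heis_s18.lcs_two, Subgroup.mem_bot, hφ] at hmem
    exact absurd (congrArg Heis_s18.z hmem) (by simp [Heis_s18.one_z])
end
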